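/- Let d ≥ 2. Assume that the operators X_i satisfy X_i∘X_{−i} = Id on ⟨B⟩_{≤d−2} for every 1 ≤ i ≤ n, and X_i∘X_j = X_j∘X_i on ⟨B⟩_{≤d−2} for every 1 ≤ i < j ≤ n. Then for every monomial m with δ(m) ≤ d one has m − σ(m) ∈ ⟨F·⟩_{≤d}; consequently ker σ ⊆ ⟨F·⟩_{≤d}. -/

import Mathlib

open scoped BigOperators

noncomputable section

namespace ToricBorderBasis

/-- Exponent vectors of Laurent monomials in `n` variables. -/
abbrev Exp (n : ℕ) := Fin n → ℤ

/-- The ring `S = k[x₁^{±1},…,xₙ^{±1}]` of Laurent polynomials,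
realized as the monoid algebra of `ℤⁿ` over `k`. -/
abbrev LaurentS (n : ℕ) (k : Type*) [Field k] : Type _ := AddMonoidAlgebra k (Exp n)

variable {k : Type*} [Field k] {n : ℕ}

/-- Degree `δ(x^α) = |α₁| + ⋯ + |αₙ|` of a monomial. -/
def edeg {n : ℕ} (α : Exp n) : ℕ := ∑ i, (α i).natAbs

/-- The monomial `x^α`. -/
def mono (k : Type*) [Field k] {n : ℕ} (α : Exp n) : LaurentS n k :=
  AddMonoidAlgebra.ofCoeff (Finsupp.single α 1)

/-- Degree of a Laurent polynomial: max degree of a monomial in its support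
(`0` for the zero polynomial). -/
def pdeg (p : LaurentS n k) : ℕ := (p.coeff : Exp n →₀ k).support.sup edeg

/-- Exponent of the variable `x_i` (if `s = true`) or of `x_i⁻¹` (if `s = false`);
a pair `(i, s)` encodes a signed index in `[−n,n]*`. -/
def expOf (n : ℕ) (i : Fin n) (s : Bool) : Exp n :=
  Pi.single i (if s then 1 else -1)

/-- The variable `x_i` resp. its inverse `x_i⁻¹`. -/
def varX (k : Type*) [Field k] {n : ℕ} (i : Fin n) (s : Bool) : LaurentS n k :=
  mono k (expOf n i s)

/-- Prolongation `B^× = B ∪ ⋃_{i∈[−n,n]*} x_i B` (on exponents). -/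
def Bx {n : ℕ} (B : Set (Exp n)) : Set (Exp n) :=
  B ∪ {β | ∃ i s, ∃ α ∈ B, β = expOf n i s + α}

/-- Border `∂B = B^× \ B`. -/
def bord {n : ℕ} (B : Set (Exp n)) : Set (Exp n) := Bx B \ B

/-- `B` is connected to `1`. -/
def ConnectedToOne {n : ℕ} (B : Set (Exp n)) : Prop :=
  (0 : Exp n) ∈ B ∧ ∀ α ∈ B, α ≠ 0 →
    ∃ i s, ∃ α' ∈ B, α = expOf n i s + α' ∧ edeg α' < edeg α

/-- `⟨A⟩_{≤d}`: the `k`-span of the monomials with exponent in `A` and degree `≤ d`. -/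
def spanMonLE (k : Type*) [Field k] {n : ℕ} (A : Set (Exp n)) (d : ℕ) :
    Submodule k (LaurentS n k) :=
  Submodule.span k {p | ∃ α ∈ A, edeg α ≤ d ∧ p = mono k α}

/-- `⟨A⟩`: the `k`-span of all monomials with exponent in `A`. -/
def spanMon (k : Type*) [Field k] {n : ℕ} (A : Set (Exp n)) :
    Submodule k (LaurentS n k) :=
  Submodule.span k {p | ∃ α ∈ A, p = mono k α}

/-- The multiplication operator `X_i : b ↦ π(x_i b)` associated to a projection `π`. -/
def Xop (π : LaurentS n k →ₗ[k] LaurentS n k) (i : Fin n) (s : Bool) :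
    LaurentS n k →ₗ[k] LaurentS n k :=
  π ∘ₗ LinearMap.mulLeft k (varX k i s)

/-- `X_i^{a}` for `a ∈ ℤ`: iterate `X_i` if `a ≥ 0` and `X_{−i}` if `a < 0`. -/
def Xpow (π : LaurentS n k →ₗ[k] LaurentS n k) (i : Fin n) (a : ℤ) :
    Module.End k (LaurentS n k) :=
  if 0 ≤ a then (Xop π i true : Module.End k (LaurentS n k)) ^ a.toNat
  else (Xop π i false : Module.End k (LaurentS n k)) ^ (-a).toNat

/-- `X^α = X₁^{α₁} ∘ ⋯ ∘ Xₙ^{αₙ}`. -/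
def Xmon (π : LaurentS n k →ₗ[k] LaurentS n k) (α : Exp n) :
    Module.End k (LaurentS n k) :=
  (List.ofFn fun i => Xpow π i (α i)).prod

/-- `σ(p) = p(X)(1)`, extended linearly from monomials. -/
def sigma (π : LaurentS n k →ₗ[k] LaurentS n k) (p : LaurentS n k) : LaurentS n k :=
  (p.coeff : Exp n →₀ k).sum fun α c => c • (Xmon π α (1 : LaurentS n k))

/-- The rewriting family `F` for `π` in degree `≤ d`:
the polynomials `x^β − π(x^β)` for `x^β ∈ (∂B)_{≤d}`. -/
def rewFam (π : LaurentS n k →ₗ[k] LaurentS n k) (B : Set (Exp n)) (d : ℕ) :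
    Set (LaurentS n k) :=
  {f | ∃ β ∈ bord B, edeg β ≤ d ∧ f = mono k β - π (mono k β)}

/-- `⟨F·⟩_{≤d}`: the `k`-span of the products `m·f`, `m` a monomial, `f ∈ F`,
`δ(m·f) ≤ d`. -/
def multSpanLE (k : Type*) [Field k] {n : ℕ} (F : Set (LaurentS n k)) (d : ℕ) :
    Submodule k (LaurentS n k) :=
  Submodule.span k {q | (∃ α : Exp n, ∃ f ∈ F, q = mono k α * f) ∧ pdeg q ≤ d}

/-- Prolongation polynomials `C¹_B(F)`: the `x_i f` lying in `⟨B^×⟩`. -/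
def comSet1 (B : Set (Exp n)) (F : Set (LaurentS n k)) : Set (LaurentS n k) :=
  {p | (∃ i s, ∃ f ∈ F, p = varX k i s * f) ∧ p ∈ spanMon k (Bx B)}

/-- Commutation polynomials `C²_B(F)`: the `x_i f − x_j f′` (`i ≠ j`) lying in `⟨B^×⟩`. -/
def comSet2 (B : Set (Exp n)) (F : Set (LaurentS n k)) : Set (LaurentS n k) :=
  {p | (∃ i s j t, (i, s) ≠ (j, t) ∧ ∃ f ∈ F, ∃ f' ∈ F,
        p = varX k i s * f - varX k j t * f') ∧ p ∈ spanMon k (Bx B)}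

/-- `C_B(F) = C¹_B(F) ∪ C²_B(F)`. -/
def comSet (B : Set (Exp n)) (F : Set (LaurentS n k)) : Set (LaurentS n k) :=
  comSet1 B F ∪ comSet2 B F

/-- `π` is a degree-compatible projection from `⟨B^×⟩_{≤d}` onto `⟨B⟩_{≤d}`
(encoded as a global linear map with the required restriction properties). -/
def IsProjLE (π : LaurentS n k →ₗ[k] LaurentS n k) (B : Set (Exp n)) (d : ℕ) : Prop :=
  (∀ p ∈ spanMonLE k (Bx B) d, π p ∈ spanMonLE k B d) ∧
  (∀ p ∈ spanMonLE k B d, π p = p) ∧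
  (∀ p ∈ spanMonLE k (Bx B) d, pdeg (π p) ≤ pdeg p)

/-- Inversion relations: `X_i ∘ X_{−i} = Id` on `⟨B⟩_{≤e}` for `1 ≤ i ≤ n`. -/
def InvRel (π : LaurentS n k →ₗ[k] LaurentS n k) (B : Set (Exp n)) (e : ℕ) : Prop :=
  ∀ i : Fin n, ∀ b ∈ spanMonLE k B e, Xop π i true (Xop π i false b) = b

/-- Commutation relations: `X_i ∘ X_j = X_j ∘ X_i` on `⟨B⟩_{≤e}` for `1 ≤ i < j ≤ n`. -/
def CommRel (π : LaurentS n k →ₗ[k] LaurentS n k) (B : Set (Exp n)) (e : ℕ) : Prop :=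
  ∀ i j : Fin n, i < j → ∀ b ∈ spanMonLE k B e,
    Xop π i true (Xop π j true b) = Xop π j true (Xop π i true b)

end ToricBorderBasis

namespace ToricBorderBasis

section Aux

variable {k : Type*} [Field k] {n : ℕ}

lemma edeg_add_le (α β : Exp n) : edeg (α + β) ≤ edeg α + edeg β := by
  classical
  unfold edeg
  rw [← Finset.sum_add_distrib]
  exact Finset.sum_le_sum fun i _ => Int.natAbs_add_le _ _

lemma edeg_single (i : Fin n) (c : ℤ) : edeg (Pi.single i c : Exp n) = c.natAbs := by
  classical
  unfold edeg
  rw [Finset.sum_eq_single i]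
  · simp
  · intro j _ hj; simp [Pi.single_apply, hj]
  · simp

lemma edeg_expOf (i : Fin n) (s : Bool) : edeg (expOf n i s) = 1 := by
  unfold expOf; rw [edeg_single]; cases s <;> simp

lemma spanMonLE_eq (A : Set (Exp n)) (e : ℕ) :
    spanMonLE k A e = AddMonoidAlgebra.supported k k {α | α ∈ A ∧ edeg α ≤ e} := by
  rw [AddMonoidAlgebra.supported_eq_span_single]
  unfold spanMonLE
  congr 1
  ext p
  constructor
  · rintro ⟨α, hα, hde, rfl⟩; exact ⟨α, ⟨hα, hde⟩, rfl⟩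
  · rintro ⟨α, ⟨hα, hde⟩, rfl⟩; exact ⟨α, hα, hde, rfl⟩

lemma mem_spanMonLE_iff {A : Set (Exp n)} {e : ℕ} {p : LaurentS n k} :
    p ∈ spanMonLE k A e ↔ ∀ β ∈ p.coeff.support, β ∈ A ∧ edeg β ≤ e := by
  rw [spanMonLE_eq, AddMonoidAlgebra.mem_supported]
  constructor
  · intro h β hβ; exact h hβ
  · intro h β hβ; exact h β hβ

lemma pdeg_le_iff {p : LaurentS n k} {e : ℕ} :
    pdeg p ≤ e ↔ ∀ β ∈ p.coeff.support, edeg β ≤ e := Finset.sup_le_iff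

lemma pdeg_mono (α : Exp n) : pdeg (mono k α) = edeg α := by
  unfold pdeg mono
  rw [AddMonoidAlgebra.coeff_ofCoeff, Finsupp.support_single_ne_zero _ (one_ne_zero)]
  simp

lemma pdeg_sub_le (p q : LaurentS n k) : pdeg (p - q) ≤ max (pdeg p) (pdeg q) := by
  classical
  refine pdeg_le_iff.2 fun β hβ => ?_
  rw [AddMonoidAlgebra.coeff_sub] at hβ
  rcases Finset.mem_union.1 (Finsupp.support_sub hβ) with h | h
  · exact le_max_of_le_left (Finset.le_sup h)
  · exact le_max_of_le_right (Finset.le_sup h)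

lemma support_mono_mul {μ : Exp n} {q : LaurentS n k} {β : Exp n}
    (hβ : β ∈ (mono k μ * q : LaurentS n k).coeff.support) :
    ∃ γ ∈ q.coeff.support, β = μ + γ := by
  classical
  have h := AddMonoidAlgebra.support_coeff_mul_subset (mono k μ) q hβ
  rw [Finset.mem_add] at h
  obtain ⟨a, ha, γ, hγ, rfl⟩ := h
  have : a = μ := by
    have := Finsupp.support_single_subset ha
    simpa [mono, AddMonoidAlgebra.coeff_ofCoeff] using this
  exact ⟨γ, hγ, by rw [this]⟩

lemma pdeg_mono_mul_le (μ : Exp n) (q : LaurentS n k) :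
    pdeg (mono k μ * q) ≤ edeg μ + pdeg q := by
  refine pdeg_le_iff.2 fun β hβ => ?_
  obtain ⟨γ, hγ, rfl⟩ := support_mono_mul hβ
  exact le_trans (edeg_add_le _ _)
    (add_le_add le_rfl (Finset.le_sup hγ))

lemma varX_mul_mono (i : Fin n) (s : Bool) (β : Exp n) :
    varX k i s * mono k β = mono k (expOf n i s + β) := by
  unfold varX mono
  simp only [AddMonoidAlgebra.ofCoeff_single]
  rw [AddMonoidAlgebra.single_mul_single, one_mul]

end Aux
section Core

variable {k : Type*} [Field k] {n : ℕ}
variable (π : LaurentS n k →ₗ[k] LaurentS n k) (B : Set (Exp n)) (d : ℕ)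

lemma varX_mul_mem {e : ℕ} (he : e + 1 ≤ d) (i : Fin n) (s : Bool)
    {b : LaurentS n k} (hb : b ∈ spanMonLE k B e) :
    varX k i s * b ∈ spanMonLE k (Bx B) d ∧ pdeg (varX k i s * b) ≤ e + 1 := by
  have hsupp : ∀ β ∈ (varX k i s * b : LaurentS n k).coeff.support,
      β ∈ Bx B ∧ edeg β ≤ e + 1 := by
    intro β hβ
    obtain ⟨γ, hγ, rfl⟩ := support_mono_mul (μ := expOf n i s) (q := b) hβ
    have hγB := (mem_spanMonLE_iff.1 hb) γ hγ
    constructor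
    · exact Or.inr ⟨i, s, γ, hγB.1, rfl⟩
    · calc edeg (expOf n i s + γ) ≤ edeg (expOf n i s) + edeg γ := edeg_add_le _ _
        _ ≤ 1 + e := by rw [edeg_expOf]; omega
        _ = e + 1 := by omega
  constructor
  · exact mem_spanMonLE_iff.2 fun β hβ => ⟨(hsupp β hβ).1, le_trans (hsupp β hβ).2 he⟩
  · exact pdeg_le_iff.2 fun β hβ => (hsupp β hβ).2

lemma Xop_mem (hπ : IsProjLE π B d) {e : ℕ} (he : e + 1 ≤ d) (i : Fin n) (s : Bool)
    {b : LaurentS n k} (hb : b ∈ spanMonLE k B e) :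
    Xop π i s b ∈ spanMonLE k B (e + 1) := by
  obtain ⟨hmem, hdeg⟩ := varX_mul_mem B d he i s hb
  have h1 : π (varX k i s * b) ∈ spanMonLE k B d := hπ.1 _ hmem
  have h2 : pdeg (π (varX k i s * b)) ≤ e + 1 := le_trans (hπ.2.2 _ hmem) hdeg
  have : Xop π i s b = π (varX k i s * b) := rfl
  rw [this]
  exact mem_spanMonLE_iff.2 fun β hβ =>
    ⟨((mem_spanMonLE_iff.1 h1) β hβ).1, pdeg_le_iff.1 h2 β hβ⟩

lemma key_mem_M (hπ : IsProjLE π B d) (i : Fin n) (s : Bool) (μ : Exp n) (e : ℕ)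
    (he : edeg μ + (e + 1) ≤ d) {b : LaurentS n k} (hb : b ∈ spanMonLE k B e) :
    mono k μ * (varX k i s * b - Xop π i s b) ∈ multSpanLE k (rewFam π B d) d := by
  have he' : e + 1 ≤ d := by omega
  refine Submodule.span_induction (p := fun b _ =>
      mono k μ * (varX k i s * b - Xop π i s b) ∈ multSpanLE k (rewFam π B d) d)
    ?_ ?_ ?_ ?_ hb
  · rintro p ⟨β, hβB, hβe, rfl⟩
    set γ := expOf n i s + β with hγdef
    have hvm : varX k i s * mono k β = mono k γ := varX_mul_mono i s β
    have hγd : edeg γ ≤ e + 1 := by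
      calc edeg γ ≤ edeg (expOf n i s) + edeg β := edeg_add_le _ _
        _ ≤ 1 + e := by rw [edeg_expOf]; omega
        _ = e + 1 := by omega
    have hγBx : γ ∈ Bx B := Or.inr ⟨i, s, β, hβB, rfl⟩
    have hγmem : mono k γ ∈ spanMonLE k (Bx B) d :=
      Submodule.subset_span ⟨γ, hγBx, le_trans hγd he', rfl⟩
    by_cases hγB : γ ∈ B
    · have : π (mono k γ) = mono k γ :=
        hπ.2.1 _ (Submodule.subset_span ⟨γ, hγB, le_trans hγd he', rfl⟩)
      have hXop : Xop π i s (mono k β) = mono k γ := by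
        show π (varX k i s * mono k β) = mono k γ
        rw [hvm, this]
      rw [hXop, hvm, sub_self, mul_zero]
      exact Submodule.zero_mem _
    · have hbord : γ ∈ bord B := ⟨hγBx, hγB⟩
      have hf : mono k γ - π (mono k γ) ∈ rewFam π B d :=
        ⟨γ, hbord, le_trans hγd he', rfl⟩
      have hXop : Xop π i s (mono k β) = π (mono k γ) := by
        show π (varX k i s * mono k β) = _; rw [hvm]
      rw [hXop, hvm]
      refine Submodule.subset_span ⟨⟨μ, _, hf, rfl⟩, ?_⟩
      calc pdeg (mono k μ * (mono k γ - π (mono k γ)))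
          ≤ edeg μ + pdeg (mono k γ - π (mono k γ)) := pdeg_mono_mul_le _ _
        _ ≤ edeg μ + max (pdeg (mono k γ)) (pdeg (π (mono k γ))) := by
            exact add_le_add le_rfl (pdeg_sub_le _ _)
        _ ≤ edeg μ + edeg γ := by
            refine add_le_add le_rfl (max_le ?_ ?_)
            · rw [pdeg_mono]
            · exact le_trans (hπ.2.2 _ hγmem) (le_of_eq (pdeg_mono γ))
        _ ≤ d := by omega
  · simp only [mul_zero, map_zero, sub_zero, mul_zero]
    exact Submodule.zero_mem _
  · intro p q _ _ hp hq
    have : mono k μ * (varX k i s * (p + q) - Xop π i s (p + q)) =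
        mono k μ * (varX k i s * p - Xop π i s p) +
        mono k μ * (varX k i s * q - Xop π i s q) := by
      rw [map_add]; ring
    rw [this]; exact Submodule.add_mem _ hp hq
  · intro c p _ hp
    have : mono k μ * (varX k i s * (c • p) - Xop π i s (c • p)) =
        c • (mono k μ * (varX k i s * p - Xop π i s p)) := by
      rw [map_smul]
      simp only [mul_sub, smul_sub, mul_smul_comm]
    rw [this]; exact Submodule.smul_mem _ _ hp

/-- Apply a word of operators to an element. -/
def apW (w : List (Fin n × Bool)) (b : LaurentS n k) : LaurentS n k :=
  w.foldr (fun p acc => Xop π p.1 p.2 acc) b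

/-- Monomial of a word. -/
def monoW (w : List (Fin n × Bool)) : LaurentS n k :=
  (w.map fun p => varX k p.1 p.2).prod

lemma apW_mem (hπ : IsProjLE π B d) (hB0 : (0 : Exp n) ∈ B)
    (w : List (Fin n × Bool)) (hw : w.length ≤ d) :
    apW π w (1 : LaurentS n k) ∈ spanMonLE k B w.length := by
  induction w with
  | nil =>
    refine Submodule.subset_span ⟨0, hB0, ?_, ?_⟩
    · simp [edeg]
    · show (1 : LaurentS n k) = mono k 0
      exact AddMonoidAlgebra.one_def (R := k) (M := Exp n)
  | cons p w' ih =>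
    have hw' : w'.length ≤ d := by simp at hw; omega
    have : apW π (p :: w') (1 : LaurentS n k) = Xop π p.1 p.2 (apW π w' 1) := rfl
    rw [this]
    have hlen : w'.length + 1 ≤ d := by simpa using hw
    exact Xop_mem π B d hπ hlen p.1 p.2 (ih hw')

lemma main_word (hπ : IsProjLE π B d) (hB0 : (0 : Exp n) ∈ B)
    (w : List (Fin n × Bool)) :
    ∀ μ : Exp n, edeg μ + w.length ≤ d →
      mono k μ * (monoW w - apW π w (1 : LaurentS n k)) ∈
        multSpanLE k (rewFam π B d) d := by
  induction w with
  | nil =>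
    intro μ _
    simp only [monoW, List.map_nil, List.prod_nil, apW, List.foldr_nil, sub_self, mul_zero]
    exact Submodule.zero_mem _
  | cons p w' ih =>
    intro μ hμ
    have hlen : edeg μ + (w'.length + 1) ≤ d := by simpa using hμ
    have hb : apW π w' (1 : LaurentS n k) ∈ spanMonLE k B w'.length :=
      apW_mem π B d hπ hB0 w' (by omega)
    have h2 : mono k μ * (varX k p.1 p.2 * apW π w' 1 - Xop π p.1 p.2 (apW π w' 1)) ∈
        multSpanLE k (rewFam π B d) d :=
      key_mem_M π B d hπ p.1 p.2 μ w'.length hlen hb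
    have h1 : mono k (μ + expOf n p.1 p.2) * (monoW w' - apW π w' 1) ∈
        multSpanLE k (rewFam π B d) d := by
      refine ih (μ + expOf n p.1 p.2) ?_
      calc edeg (μ + expOf n p.1 p.2) + w'.length
          ≤ edeg μ + edeg (expOf n p.1 p.2) + w'.length := by
            exact add_le_add (edeg_add_le _ _) le_rfl
        _ = edeg μ + 1 + w'.length := by rw [edeg_expOf]
        _ ≤ d := by omega
    have heq : mono k μ * (monoW (p :: w') - apW π (p :: w') 1) =
        mono k (μ + expOf n p.1 p.2) * (monoW w' - apW π w' 1) +
        mono k μ * (varX k p.1 p.2 * apW π w' 1 - Xop π p.1 p.2 (apW π w' 1)) := by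
      have e1 : monoW (p :: w') = varX k p.1 p.2 * monoW w' := by
        simp [monoW]
      have e2 : apW π (p :: w') (1 : LaurentS n k) = Xop π p.1 p.2 (apW π w' 1) := rfl
      have e3 : mono k (μ + expOf n p.1 p.2) = mono k μ * varX k p.1 p.2 := by
        simp only [varX, mono, AddMonoidAlgebra.ofCoeff_single, AddMonoidAlgebra.single_mul_single, one_mul]
      rw [e1, e2, e3]; ring
    rw [heq]
    exact Submodule.add_mem _ h1 h2

end Core
section Word

variable {k : Type*} [Field k] {n : ℕ}

/-- The canonical word of a Laurent exponent. -/
def word (n : ℕ) (α : Exp n) : List (Fin n × Bool) :=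
  (List.ofFn fun i => List.replicate (α i).natAbs (i, decide (0 ≤ α i))).flatten

lemma word_length (α : Exp n) : (word n α).length = edeg α := by
  unfold word edeg
  rw [List.length_flatten]
  rw [List.map_ofFn, List.sum_ofFn]
  simp

lemma monoW_word (α : Exp n) : (monoW (word n α) : LaurentS n k) = mono k α := by
  unfold monoW word
  rw [List.map_flatten, List.map_ofFn]
  rw [List.prod_flatten, List.map_ofFn, List.prod_ofFn]
  have h1 : ∀ i : Fin n,
      ((List.map (fun p => varX k p.1 p.2) (List.replicate (α i).natAbs
        (i, decide (0 ≤ α i)))).prod : LaurentS n k)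
      = mono k (((α i).natAbs : ℕ) • expOf n i (decide (0 ≤ α i))) := by
    intro i
    rw [List.map_replicate, List.prod_replicate]
    unfold varX mono
    simp only [AddMonoidAlgebra.ofCoeff_single]
    rw [AddMonoidAlgebra.single_pow, one_pow]
  simp only [Function.comp_apply]
  simp_rw [h1]
  have h2 : ∀ (β : Fin n → Exp n), (∏ i, mono k (β i)) = mono k (∑ i, β i) := by
    intro β
    classical
    unfold mono
    simp only [AddMonoidAlgebra.ofCoeff_single]
    induction (Finset.univ : Finset (Fin n)) using Finset.induction with
    | empty => simp [AddMonoidAlgebra.one_def]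
    | insert _ _ h ih =>
      rw [Finset.prod_insert h, Finset.sum_insert h, ih,
        AddMonoidAlgebra.single_mul_single, one_mul]
  rw [h2]
  congr 1
  funext j
  rw [Finset.sum_apply]
  rw [Finset.sum_eq_single j]
  · rcases le_or_gt 0 (α j) with h | h
    · simp only [expOf, h, decide_eq_true_eq, if_pos, Pi.smul_apply,
        Pi.single_eq_same, decide_true, smul_eq_mul, nsmul_eq_mul, mul_one]
      omega
    · have h' : ¬ (0 ≤ α j) := not_le.2 h
      simp only [expOf, h', decide_false, Bool.false_eq_true, if_false,
        Pi.smul_apply, Pi.single_eq_same, smul_eq_mul, nsmul_eq_mul, mul_neg, mul_one]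
      omega
  · intro i _ hij
    simp [expOf, Pi.single_apply, hij]
  · simp

lemma prod_end_apply (l : List (Module.End k (LaurentS n k))) (v : LaurentS n k) :
    l.prod v = l.foldr (fun f x => f x) v := by
  induction l with
  | nil => rfl
  | cons f l ih => rw [List.prod_cons, List.foldr_cons, Module.End.mul_apply, ih]

lemma pow_end_apply (π : LaurentS n k →ₗ[k] LaurentS n k) (i : Fin n) (s : Bool)
    (m : ℕ) (v : LaurentS n k) :
    ((Xop π i s : Module.End k (LaurentS n k)) ^ m) v =
      (List.replicate m (i, s)).foldr (fun p x => Xop π p.1 p.2 x) v := by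
  induction m with
  | zero => rfl
  | succ m ih =>
    rw [pow_succ', Module.End.mul_apply, List.replicate_succ, List.foldr_cons, ih]

lemma Xpow_apply (π : LaurentS n k →ₗ[k] LaurentS n k) (i : Fin n) (a : ℤ)
    (v : LaurentS n k) :
    Xpow π i a v = (List.replicate a.natAbs (i, decide (0 ≤ a))).foldr
      (fun p x => Xop π p.1 p.2 x) v := by
  unfold Xpow
  by_cases h : 0 ≤ a
  · rw [if_pos h]
    have : a.toNat = a.natAbs := by omega
    rw [this, pow_end_apply]
    simp [h]
  · rw [if_neg h]
    have : (-a).toNat = a.natAbs := by omega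
    rw [this, pow_end_apply]
    simp [h]

lemma foldr_word_aux (π : LaurentS n k →ₗ[k] LaurentS n k) (α : Exp n)
    (L : List (Fin n)) (v : LaurentS n k) :
    List.foldr (fun f x => f x) v (L.map fun i => Xpow π i (α i)) =
      List.foldr (fun l b => List.foldr (fun p x => Xop π p.1 p.2 x) b l) v
        (L.map fun i => List.replicate (α i).natAbs (i, decide (0 ≤ α i))) := by
  induction L with
  | nil => rfl
  | cons i L ih =>
    simp only [List.map_cons, List.foldr_cons]
    rw [ih, Xpow_apply]

lemma Xmon_eq_apW (π : LaurentS n k →ₗ[k] LaurentS n k) (α : Exp n) :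
    Xmon π α (1 : LaurentS n k) = apW π (word n α) 1 := by
  unfold Xmon apW word
  rw [prod_end_apply, List.foldr_flatten, List.ofFn_eq_map, List.ofFn_eq_map,
    foldr_word_aux]

lemma sigma_mono (π : LaurentS n k →ₗ[k] LaurentS n k) (α : Exp n) :
    sigma π (mono k α) = Xmon π α (1 : LaurentS n k) := by
  unfold sigma mono
  rw [AddMonoidAlgebra.coeff_ofCoeff, Finsupp.sum_single_index]
  · rw [one_smul]
  · rw [zero_smul]

end Word

end ToricBorderBasis

namespace ToricBorderBasis

/-- Under the inversion and commutation relations on `⟨B⟩_{≤d−2}`,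
every monomial `m` with `δ(m) ≤ d` satisfies `m − σ(m) ∈ ⟨F·⟩_{≤d}`; consequently
`ker σ ⊆ ⟨F·⟩_{≤d}`. -/
theorem statement_5 {n : ℕ} {k : Type*} [Field k] (d : ℕ) (hd : 2 ≤ d)
    (B : Set (Exp n)) (hBfin : B.Finite) (hB1 : ConnectedToOne B)
    (π : LaurentS n k →ₗ[k] LaurentS n k) (hπ : IsProjLE π B d)
    (hinv : InvRel π B (d - 2)) (hcomm : CommRel π B (d - 2)) :
    (∀ α : Exp n, edeg α ≤ d →
      mono k α - sigma π (mono k α) ∈ multSpanLE k (rewFam π B d) d) ∧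
    (∀ p : LaurentS n k, pdeg p ≤ d → sigma π p = 0 →
      p ∈ multSpanLE k (rewFam π B d) d) := by
  have hB0 : (0 : Exp n) ∈ B := hB1.1
  have edeg_zero : edeg (0 : Exp n) = 0 := by simp [edeg]
  have hmain : ∀ α : Exp n, edeg α ≤ d →
      mono k α - sigma π (mono k α) ∈ multSpanLE k (rewFam π B d) d := by
    intro α hα
    have h := main_word π B d hπ hB0 (word n α) 0
      (by rw [word_length, edeg_zero]; omega)
    rw [monoW_word, ← Xmon_eq_apW, ← sigma_mono] at h
    have h1 : mono k (0 : Exp n) = (1 : LaurentS n k) := AddMonoidAlgebra.one_def.symm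
    rwa [h1, one_mul] at h
  refine ⟨hmain, ?_⟩
  intro p hp hsig
  have hrepr : p - sigma π p =
      p.coeff.sum fun β c => c • (mono k β - sigma π (mono k β)) := by
    have h1 : p = p.coeff.sum fun β c => c • mono k β := by
      conv_lhs => rw [← AddMonoidAlgebra.sum_coeff_single p]
      refine Finsupp.sum_congr fun β _ => ?_
      rw [mono, AddMonoidAlgebra.ofCoeff_single, AddMonoidAlgebra.smul_single', mul_one]
    have h2 : sigma π p = p.coeff.sum fun β c => c • sigma π (mono k β) := by
      show p.coeff.sum (fun β c => c • Xmon π β (1 : LaurentS n k)) = _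
      refine Finsupp.sum_congr fun β _ => ?_
      rw [sigma_mono]
    calc p - sigma π p
        = (p.coeff.sum fun β c => c • mono k β) -
            (p.coeff.sum fun β c => c • sigma π (mono k β)) := by
          rw [← h1, ← h2]
      _ = p.coeff.sum fun β c =>
            c • mono k β - c • sigma π (mono k β) := Finsupp.sum_sub.symm
      _ = p.coeff.sum fun β c => c • (mono k β - sigma π (mono k β)) :=
          Finsupp.sum_congr fun β _ => (smul_sub _ _ _).symm
  have hmem : p - sigma π p ∈ multSpanLE k (rewFam π B d) d := by
    rw [hrepr]
    refine Submodule.finsuppSum_mem _ _ _ _ fun β hc => ?_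
    have hβ : β ∈ p.coeff.support := Finsupp.mem_support_iff.2 hc
    have : edeg β ≤ d := le_trans (Finset.le_sup hβ) hp
    exact Submodule.smul_mem _ _ (hmain β this)
  rwa [hsig, sub_zero] at hmem

end ToricBorderBasis
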